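/- Factorial moments for p = 1: for the pills urn with matrix ((−a,0),(a,−d)) with a ≠ d and a,d > 0, the s-th factorial moment of X̃_{n,m} = X_{n,m} − 1 is E((X̃_{n,m})_s) = s! Σ_{ℓ=0}^{s} [C(n,ℓ) C(m,s−ℓ)/(a/d − 1)^{s−ℓ}] Σ_{i=0}^{s−ℓ} (−1)^{s−ℓ−i} C(s−ℓ,i) / C(m−s+ℓ+i+(a/d)(s−i), m−s+ℓ). -/

import Mathlib

open Finset MeasureTheory

/-- The probability generating function of the generalized pills urn with replacement matrix
`((-α, 0), (αp, -δ))`. -/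
noncomputable def pillsH (α δ : ℝ) (p : ℕ) : ℕ → ℕ → ℝ → ℝ
  | n, 0, v => v ^ n
  | 0, m + 1, v => pillsH α δ p p m v
  | n + 1, m + 1, v =>
      α * (n + 1) / (α * (n + 1) + δ * (m + 1)) * pillsH α δ p n (m + 1) v
        + δ * (m + 1) / (α * (n + 1) + δ * (m + 1)) * pillsH α δ p (n + 1 + p) m v
  termination_by n m _ => (m, n)

/-- Generalized binomial coefficient `C(x, k) = x(x-1)⋯(x-k+1)/k!` for real `x`. -/
noncomputable def genChoose (x : ℝ) (k : ℕ) : ℝ :=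
  (∏ i ∈ range k, (x - i)) / (k.factorial : ℝ)

open intervalIntegral

noncomputable def pW (r v x : ℝ) : ℝ := 1 + (v - 1) * x ^ r
noncomputable def pG (r v x : ℝ) : ℝ := 1 - x + (v - 1) * (x - x ^ r) / (r - 1)

variable {r v : ℝ}

lemma contW (hr : 0 < r) : Continuous (pW r v) := by
  unfold pW; fun_prop (disch := positivity)

lemma contG (hr : 0 < r) : Continuous (pG r v) := by
  unfold pG; fun_prop (disch := positivity)

lemma hasDerivW (hr : 0 < r) {x : ℝ} (hx : x ≠ 0) :
    HasDerivAt (pW r v) ((v - 1) * (r * x ^ (r - 1))) x := by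
  have h := (Real.hasDerivAt_rpow_const (p := r) (Or.inl hx)).const_mul (v - 1)
  exact h.const_add 1

lemma hasDerivG (hr : 0 < r) {x : ℝ} (hx : x ≠ 0) :
    HasDerivAt (pG r v) (-1 + (v - 1) * (1 - r * x ^ (r - 1)) / (r - 1)) x := by
  have h1 : HasDerivAt (fun x : ℝ => 1 - x) (-1) x := by
    simpa using (hasDerivAt_id x).const_sub 1
  have h2 : HasDerivAt (fun x : ℝ => x - x ^ r) (1 - r * x ^ (r - 1)) x :=
    (hasDerivAt_id x).sub (Real.hasDerivAt_rpow_const (Or.inl hx))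
  have h3 := ((h2.const_mul (v - 1)).div_const (r - 1))
  have goal : HasDerivAt (fun x : ℝ => 1 - x + (v - 1) * (x - x ^ r) / (r - 1))
      (-1 + (v - 1) * (1 - r * x ^ (r - 1)) / (r - 1)) x := by
    exact h1.add h3
  exact goal

lemma pW_one (hr : 0 < r) : pW r v 1 = v := by simp [pW]

lemma pG_one (hr : 0 < r) : pG r v 1 = 0 := by simp [pG]

lemma pW_pow_cont (hr : 0 < r) (N : ℕ) (M : ℕ) :
    Continuous fun x => pW r v x ^ N * pG r v x ^ M :=
  ((contW hr).pow N).mul ((contG hr).pow M)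

/-- The core integration-by-parts identity: `d/dx [x W^(N+1) G^M]`. -/
lemma key1 (hr : 0 < r) (hr1 : r ≠ 1) (N M : ℕ) :
    (1 + (N + 1) * r + M) * ∫ x in (0:ℝ)..1, pW r v x ^ (N + 1) * pG r v x ^ M
      = (N + 1) * r * (∫ x in (0:ℝ)..1, pW r v x ^ N * pG r v x ^ M)
        + M * (∫ x in (0:ℝ)..1, pW r v x ^ (N + 2) * pG r v x ^ (M - 1))
        + (if M = 0 then v ^ (N + 1) else 0) := by
  have hr1' : r - 1 ≠ 0 := sub_ne_zero.mpr hr1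
  set F : ℝ → ℝ := fun x => x * (pW r v x ^ (N + 1) * pG r v x ^ M) with hF
  set f' : ℝ → ℝ := fun x =>
    (1 + (N + 1) * r + M) * (pW r v x ^ (N + 1) * pG r v x ^ M)
      - (N + 1) * r * (pW r v x ^ N * pG r v x ^ M)
      - M * (pW r v x ^ (N + 2) * pG r v x ^ (M - 1)) with hf'
  have hcont : Continuous f' :=
    ((continuous_const.mul (pW_pow_cont hr (N+1) M)).sub
      (continuous_const.mul (pW_pow_cont hr N M))).sub
      (continuous_const.mul (pW_pow_cont hr (N+2) (M-1)))
  have hFTC : ∫ x in (0:ℝ)..1, f' x = F 1 - F 0 := by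
    apply intervalIntegral.integral_eq_sub_of_hasDerivAt_of_le zero_le_one
    · exact (continuous_id.mul (pW_pow_cont hr _ _)).continuousOn
    · intro x hx
      have hx0 : x ≠ 0 := ne_of_gt hx.1
      have hW := hasDerivW (v := v) hr hx0
      have hG := hasDerivG (v := v) hr hx0
      have hD : HasDerivAt F
          (1 * (pW r v x ^ (N + 1) * pG r v x ^ M)
            + x * (((N + 1 : ℕ) : ℝ) * pW r v x ^ (N + 1 - 1) * ((v - 1) * (r * x ^ (r - 1)))
                * pG r v x ^ M
              + pW r v x ^ (N + 1) *
                (((M : ℕ) : ℝ) * pG r v x ^ (M - 1)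
                  * (-1 + (v - 1) * (1 - r * x ^ (r - 1)) / (r - 1))))) x :=
        (hasDerivAt_id x).mul ((hW.pow (N + 1)).mul (hG.pow M))
      refine hD.congr_deriv (Eq.symm ?_)
      have hxr : x ^ (r - 1) = x ^ r / x := Real.rpow_sub_one hx0 r
      rw [hf']
      simp only [pW, pG, hxr, Nat.add_sub_cancel]
      rcases M with _ | M'
      · push_cast
        field_simp
        ring
      · have hGp : ∀ y : ℝ, y ^ (M' + 1) = y * y ^ M' := fun y => by ring
        simp only [Nat.add_sub_cancel, hGp]
        push_cast
        field_simp
        ring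
    · exact hcont.intervalIntegrable _ _
  have hint : ∀ N M : ℕ, IntervalIntegrable (fun x => pW r v x ^ N * pG r v x ^ M)
      MeasureTheory.volume (0:ℝ) 1 := fun N M => (pW_pow_cont hr N M).intervalIntegrable _ _
  have hsplit : ∫ x in (0:ℝ)..1, f' x
      = (1 + (N + 1) * r + M) * (∫ x in (0:ℝ)..1, pW r v x ^ (N + 1) * pG r v x ^ M)
        - (N + 1) * r * (∫ x in (0:ℝ)..1, pW r v x ^ N * pG r v x ^ M)
        - M * (∫ x in (0:ℝ)..1, pW r v x ^ (N + 2) * pG r v x ^ (M - 1)) := by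
    rw [hf']
    rw [intervalIntegral.integral_sub, intervalIntegral.integral_sub]
    · rw [intervalIntegral.integral_const_mul, intervalIntegral.integral_const_mul,
        intervalIntegral.integral_const_mul]
    · exact ((hint _ _).const_mul _)
    · exact ((hint _ _).const_mul _)
    · exact ((hint _ _).const_mul _).sub ((hint _ _).const_mul _)
    · exact ((hint _ _).const_mul _)
  have hbound : F 1 - F 0 = (if M = 0 then v ^ (N + 1) else 0) := by
    rw [hF]
    simp only [pW_one hr, pG_one hr]
    rcases M with _ | M' <;> simp
  rw [hsplit, hbound] at hFTC
  linarith

lemma key0 (hr : 0 < r) (hr1 : r ≠ 1) (M : ℕ) :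
    (1 + (M : ℝ)) * ∫ x in (0:ℝ)..1, pG r v x ^ M
      = M * (∫ x in (0:ℝ)..1, pW r v x * pG r v x ^ (M - 1))
        + (if M = 0 then 1 else 0) := by
  have hr1' : r - 1 ≠ 0 := sub_ne_zero.mpr hr1
  set F : ℝ → ℝ := fun x => x * pG r v x ^ M with hF
  set f' : ℝ → ℝ := fun x =>
    (1 + (M : ℝ)) * pG r v x ^ M - M * (pW r v x * pG r v x ^ (M - 1)) with hf'
  have hcontG : Continuous fun x => pG r v x ^ M := (contG hr).pow M
  have hcontWG : Continuous fun x => pW r v x * pG r v x ^ (M - 1) :=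
    (contW hr).mul ((contG hr).pow (M - 1))
  have hcont : Continuous f' :=
    (continuous_const.mul hcontG).sub (continuous_const.mul hcontWG)
  have hFTC : ∫ x in (0:ℝ)..1, f' x = F 1 - F 0 := by
    apply intervalIntegral.integral_eq_sub_of_hasDerivAt_of_le zero_le_one
    · exact (continuous_id.mul hcontG).continuousOn
    · intro x hx
      have hx0 : x ≠ 0 := ne_of_gt hx.1
      have hG := hasDerivG (v := v) hr hx0
      have hD : HasDerivAt F
          (1 * pG r v x ^ M
            + x * (((M : ℕ) : ℝ) * pG r v x ^ (M - 1)
                * (-1 + (v - 1) * (1 - r * x ^ (r - 1)) / (r - 1)))) x :=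
        (hasDerivAt_id x).mul (hG.pow M)
      refine hD.congr_deriv (Eq.symm ?_)
      have hxr : x ^ (r - 1) = x ^ r / x := Real.rpow_sub_one hx0 r
      rw [hf']
      simp only [pW, pG, hxr]
      rcases M with _ | M'
      · push_cast; ring
      · have hGp : ∀ y : ℝ, y ^ (M' + 1) = y * y ^ M' := fun y => by ring
        simp only [Nat.add_sub_cancel, hGp]
        push_cast
        field_simp
        ring
    · exact hcont.intervalIntegrable _ _
  have hsplit : ∫ x in (0:ℝ)..1, f' x
      = (1 + (M : ℝ)) * (∫ x in (0:ℝ)..1, pG r v x ^ M)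
        - M * (∫ x in (0:ℝ)..1, pW r v x * pG r v x ^ (M - 1)) := by
    rw [hf', intervalIntegral.integral_sub, intervalIntegral.integral_const_mul,
      intervalIntegral.integral_const_mul]
    · exact (hcontG.intervalIntegrable _ _).const_mul _
    · exact (hcontWG.intervalIntegrable _ _).const_mul _
  have hbound : F 1 - F 0 = (if M = 0 then 1 else 0) := by
    rw [hF]
    simp only [pG_one hr]
    rcases M with _ | M' <;> simp
  rw [hsplit, hbound] at hFTC
  linarith


noncomputable def pPhi (r : ℝ) (n m : ℕ) (v : ℝ) : ℝ :=
  m * ∫ x in (0:ℝ)..1, pW r v x ^ n * pG r v x ^ (m - 1)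

lemma pillsH_eq_phi' (δ : ℝ) (hδ : 0 < δ) (hr : 0 < r) (hr1 : r ≠ 1) :
    ∀ m, 1 ≤ m → ∀ n, ∀ v : ℝ, pillsH (r * δ) δ 1 n m v = v * pPhi r n m v := by
  intro m hm
  induction m, hm using Nat.le_induction with
  | base =>
    intro n
    induction n with
    | zero =>
      intro v
      rw [pillsH, pillsH]
      simp [pPhi]
    | succ n ihn =>
      intro v
      rw [pillsH, ihn v]
      have K := key1 (r := r) (v := v) hr hr1 n 0
      simp only [pow_zero, mul_one, Nat.cast_zero, zero_mul, add_zero,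
        Nat.cast_one, if_true, Nat.sub_zero, eq_self_iff_true] at K
      simp only [pPhi, Nat.cast_one, one_mul, Nat.sub_self, pow_zero, mul_one]
      rw [pillsH]
      rw [div_mul_eq_mul_div, div_mul_eq_mul_div, ← add_div,
        div_eq_iff (by positivity)]
      push_cast at K ⊢
      linear_combination (-δ * v) * K
  | succ m hm ihm =>
    intro n
    induction n with
    | zero =>
      intro v
      rw [pillsH, ihm 1 v]
      have K := key0 (r := r) (v := v) hr hr1 m
      rw [if_neg (by omega)] at K
      simp only [pPhi, Nat.add_sub_cancel, pow_zero, one_mul, pow_one]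
      push_cast at K ⊢
      linear_combination (-v) * K
    | succ n ihn =>
      intro v
      rw [pillsH, ihn v, ihm (n + 2) v]
      have K := key1 (r := r) (v := v) hr hr1 n m
      rw [if_neg (by omega)] at K
      simp only [pPhi, Nat.add_sub_cancel]
      rw [div_mul_eq_mul_div, div_mul_eq_mul_div, ← add_div,
        div_eq_iff (by positivity)]
      push_cast at K ⊢
      linear_combination (-δ * v * ((m:ℝ) + 1)) * K

lemma pillsH_eq_phi (α δ : ℝ) (hα : 0 < α) (hδ : 0 < δ) (hαδ : α ≠ δ)
    (m : ℕ) (hm : 1 ≤ m) (n : ℕ) (v : ℝ) :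
    pillsH α δ 1 n m v = v * pPhi (α / δ) n m v := by
  have hδ0 : δ ≠ 0 := ne_of_gt hδ
  have h := pillsH_eq_phi' (r := α / δ) δ hδ (div_pos hα hδ)
    (fun h => hαδ ((div_eq_one_iff_eq hδ0).mp h)) m hm n v
  rwa [div_mul_cancel₀ α hδ0] at h

lemma betaInt : ∀ (q : ℕ) (β : ℝ), 0 ≤ β →
    ∫ x in (0:ℝ)..1, x ^ β * (1 - x) ^ q
      = (q.factorial : ℝ) / ∏ t ∈ range (q + 1), (β + 1 + t) := by
  intro q
  induction q with
  | zero =>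
    intro β hβ
    have hβ1 : β + 1 ≠ 0 := by positivity
    simp only [pow_zero, mul_one]
    rw [integral_rpow (Or.inl (by linarith))]
    rw [Real.one_rpow, Real.zero_rpow hβ1]
    simp
  | succ q ih =>
    intro β hβ
    have hβ1 : (0:ℝ) < β + 1 := by positivity
    set F : ℝ → ℝ := fun x => x ^ (β + 1) * (1 - x) ^ (q + 1) with hF
    set f' : ℝ → ℝ := fun x =>
      (β + 1) * (x ^ β * (1 - x) ^ (q + 1)) - (q + 1) * (x ^ (β + 1) * (1 - x) ^ q) with hf'
    have c1 : Continuous fun x : ℝ => x ^ β * (1 - x) ^ (q + 1) := by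
      fun_prop (disch := positivity)
    have c2 : Continuous fun x : ℝ => x ^ (β + 1) * (1 - x) ^ q := by
      fun_prop (disch := positivity)
    have hFTC : ∫ x in (0:ℝ)..1, f' x = F 1 - F 0 := by
      apply intervalIntegral.integral_eq_sub_of_hasDerivAt_of_le zero_le_one
      · exact ((Real.continuous_rpow_const (by positivity)).mul
          ((continuous_const.sub continuous_id).pow _)).continuousOn
      · intro x hx
        have hx0 : x ≠ 0 := ne_of_gt hx.1
        have h1 : HasDerivAt (fun x : ℝ => x ^ (β + 1)) ((β + 1) * x ^ (β + 1 - 1)) x :=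
          Real.hasDerivAt_rpow_const (Or.inl hx0)
        have h2 : HasDerivAt (fun x : ℝ => (1 - x) ^ (q + 1))
            (((q + 1 : ℕ) : ℝ) * (1 - x) ^ (q + 1 - 1) * (-1)) x := by
          exact HasDerivAt.pow (f := fun x : ℝ => 1 - x) (by simpa using (hasDerivAt_id x).const_sub 1) _
        have hD := h1.mul h2
        refine hD.congr_deriv (Eq.symm ?_)
        have hxr : x ^ (β + 1 - 1) = x ^ β := by norm_num
        rw [hf']
        simp only [hxr, Nat.add_sub_cancel]
        have hp : (1 - x) ^ (q + 1) = (1 - x) * (1 - x) ^ q := by ring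
        rw [hp]
        push_cast
        ring
      · exact ((continuous_const.mul c1).sub (continuous_const.mul c2)).intervalIntegrable _ _
    have hsplit : ∫ x in (0:ℝ)..1, f' x
        = (β + 1) * (∫ x in (0:ℝ)..1, x ^ β * (1 - x) ^ (q + 1))
          - (q + 1) * (∫ x in (0:ℝ)..1, x ^ (β + 1) * (1 - x) ^ q) := by
      rw [hf', intervalIntegral.integral_sub ((c1.intervalIntegrable _ _).const_mul _)
        ((c2.intervalIntegrable _ _).const_mul _), intervalIntegral.integral_const_mul,
        intervalIntegral.integral_const_mul]
    have hbound : F 1 - F 0 = 0 := by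
      rw [hF]
      simp [Real.zero_rpow (ne_of_gt hβ1)]
    rw [hsplit, hbound] at hFTC
    have hIH := ih (β + 1) (by positivity)
    have hprodpos : (0:ℝ) < ∏ t ∈ range (q + 1), (β + 1 + 1 + t) := by
      apply Finset.prod_pos; intro t ht; positivity
    have hre : ∏ t ∈ range (q + 1 + 1), (β + 1 + t)
        = (β + 1) * ∏ t ∈ range (q + 1), (β + 1 + 1 + t) := by
      rw [Finset.prod_range_succ']
      have h1 : ∀ t ∈ range (q + 1), (β + 1 + ((t + 1 : ℕ) : ℝ)) = (β + 1 + 1 + t) := by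
        intro t ht; push_cast; ring
      rw [Finset.prod_congr rfl h1]
      push_cast
      ring
    rw [hre]
    have : ∫ x in (0:ℝ)..1, x ^ β * (1 - x) ^ (q + 1)
        = ((q + 1 : ℝ)) * ((q.factorial : ℝ) / ∏ t ∈ range (q + 1), (β + 1 + 1 + t)) / (β + 1) := by
      rw [← hIH]
      field_simp at hFTC ⊢
      linarith
    rw [this]
    rw [Nat.factorial_succ]
    push_cast
    field_simp


lemma genChoose_nat_add (e : ℝ) (Q : ℕ) :
    genChoose ((Q : ℝ) + e) Q = (∏ t ∈ range Q, (e + 1 + t)) / (Q.factorial : ℝ) := by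
  unfold genChoose
  congr 1
  rw [← Finset.prod_range_reflect (fun t => e + 1 + (t : ℝ)) Q]
  apply Finset.prod_congr rfl
  intro j hj
  rw [mem_range] at hj
  have : ((Q - 1 - j : ℕ) : ℝ) = (Q : ℝ) - 1 - j := by
    have h1 : 1 + j ≤ Q := by omega
    push_cast [Nat.sub_sub, Nat.cast_sub h1]
    ring
  rw [this]
  ring

noncomputable def cCoef (r : ℝ) (n m s : ℕ) : ℝ :=
  ∑ ℓ ∈ range (s + 1),
    ((n.choose ℓ : ℝ) * (m.choose (s - ℓ) : ℝ) / (r - 1) ^ (s - ℓ))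
      * ∑ i ∈ range (s - ℓ + 1),
          (-1 : ℝ) ^ (s - ℓ - i) * ((s - ℓ).choose i : ℝ)
            / genChoose ((m : ℝ) - s + ℓ + i + r * ((s : ℝ) - i)) (m + ℓ - s)

lemma cCoef_vanish (r : ℝ) (n m s : ℕ) (hs : n + m < s) : cCoef r n m s = 0 := by
  unfold cCoef
  apply Finset.sum_eq_zero
  intro ℓ hℓ
  rcases le_or_gt ℓ n with h | h
  · rw [Nat.choose_eq_zero_of_lt (by omega : m < s - ℓ)]
    simp
  · rw [Nat.choose_eq_zero_of_lt h]
    simp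

lemma sum_triangle {M : Type*} [AddCommMonoid M] (N : ℕ) (f : ℕ → ℕ → M) :
    ∑ s ∈ range N, ∑ ℓ ∈ range (s + 1), f ℓ (s - ℓ)
      = ∑ ℓ ∈ range N, ∑ k ∈ range (N - ℓ), f ℓ k := by
  rw [Finset.sum_sigma', Finset.sum_sigma']
  apply Finset.sum_nbij' (i := fun p => (⟨p.2, p.1 - p.2⟩ : Σ _ : ℕ, ℕ))
    (j := fun p => (⟨p.1 + p.2, p.1⟩ : Σ _ : ℕ, ℕ))
  · intro p hp
    simp only [Finset.mem_sigma, mem_range] at hp ⊢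
    omega
  · intro p hp
    simp only [Finset.mem_sigma, mem_range] at hp ⊢
    omega
  · intro p hp
    simp only [Finset.mem_sigma, mem_range] at hp
    have h1 : p.snd + (p.fst - p.snd) = p.fst := by omega
    rw [h1]
  · intro p hp
    simp only [Finset.mem_sigma, mem_range] at hp
    have h1 : p.fst + p.snd - p.fst = p.snd := by omega
    rw [h1]
  · intro p hp
    rfl

lemma rpow_combine {x : ℝ} (hx : 0 < x) (r : ℝ) {k i : ℕ} (ℓ : ℕ) (hik : i ≤ k) :
    (x ^ r) ^ ℓ * x ^ i * (x ^ r) ^ (k - i)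
      = x ^ ((i : ℝ) + r * ((ℓ : ℝ) + (k : ℝ) - (i : ℝ))) := by
  rw [← Real.rpow_natCast (x ^ r) ℓ, ← Real.rpow_natCast x i, ← Real.rpow_natCast (x ^ r) (k - i),
    ← Real.rpow_mul hx.le, ← Real.rpow_mul hx.le, ← Real.rpow_add hx, ← Real.rpow_add hx]
  congr 1
  rw [Nat.cast_sub hik]
  ring

lemma integrand_expand {r v : ℝ} (hr : 0 < r) (hr1 : r ≠ 1) (n m' : ℕ)
    {x : ℝ} (hx : x ∈ Set.Ioc (0:ℝ) 1) :
    pW r v x ^ n * pG r v x ^ m'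
      = ∑ ℓ ∈ range (n + 1), ∑ k ∈ range (m' + 1), ∑ i ∈ range (k + 1),
          ((n.choose ℓ : ℝ) * (m'.choose k : ℝ) * (k.choose i : ℝ) * (-1) ^ (k - i)
              * (v - 1) ^ (ℓ + k) / (r - 1) ^ k)
            * (x ^ ((i : ℝ) + r * ((ℓ : ℝ) + (k : ℝ) - (i : ℝ))) * (1 - x) ^ (m' - k)) := by
  have hx0 : 0 < x := hx.1
  have hW : pW r v x = (v - 1) * x ^ r + 1 := by rw [pW]; ring
  have hG : pG r v x = (v - 1) * (x - x ^ r) / (r - 1) + (1 - x) := by rw [pG]; ring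
  rw [hW, hG, add_pow, add_pow, Finset.sum_mul_sum]
  apply Finset.sum_congr rfl
  intro ℓ hℓ
  apply Finset.sum_congr rfl
  intro k hk
  have hik : ∀ i ∈ range (k + 1), i ≤ k := fun i hi => by
    simpa [Nat.lt_succ_iff] using hi
  have hxk : (x - x ^ r) ^ k = ∑ i ∈ range (k + 1), x ^ i * (-(x ^ r)) ^ (k - i) * k.choose i := by
    rw [← add_pow]; ring_nf
  simp only [mul_pow, div_pow, one_pow, mul_one]
  rw [hxk, Finset.mul_sum, Finset.sum_div, Finset.sum_mul, Finset.sum_mul, Finset.mul_sum]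
  apply Finset.sum_congr rfl
  intro i hi
  rw [← rpow_combine hx0 r ℓ (hik i hi)]
  ring

lemma phi_sum {r : ℝ} (hr : 0 < r) (hr1 : r ≠ 1) (n m' : ℕ) (v : ℝ) :
    pPhi r n (m' + 1) v
      = ∑ ℓ ∈ range (n + 1), ∑ k ∈ range (m' + 1), ∑ i ∈ range (k + 1),
          (((m' + 1 : ℕ)) : ℝ) *
            (((n.choose ℓ : ℝ) * (m'.choose k : ℝ) * (k.choose i : ℝ) * (-1) ^ (k - i)
                * (v - 1) ^ (ℓ + k) / (r - 1) ^ k)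
              * (((m' - k).factorial : ℝ)
                  / ∏ t ∈ range (m' - k + 1), ((i : ℝ) + r * ((ℓ : ℝ) + k - i) + 1 + t))) := by
  have hE : ∀ (ℓ k i : ℕ), i ≤ k → (0:ℝ) ≤ (i : ℝ) + r * ((ℓ : ℝ) + k - i) := by
    intro ℓ k i h
    have h1 : (i:ℝ) ≤ (k:ℝ) := by exact_mod_cast h
    have h2 : (0:ℝ) ≤ (ℓ:ℝ) + k - i := by
      have h3 : (0:ℝ) ≤ (ℓ:ℝ) := Nat.cast_nonneg ℓ
      linarith
    have h4 := mul_nonneg hr.le h2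
    have h5 : (0:ℝ) ≤ (i:ℝ) := Nat.cast_nonneg i
    linarith
  have hterm : ∀ ℓ k i : ℕ, i ≤ k → Continuous (fun x : ℝ =>
      ((n.choose ℓ : ℝ) * (m'.choose k : ℝ) * (k.choose i : ℝ) * (-1) ^ (k - i)
          * (v - 1) ^ (ℓ + k) / (r - 1) ^ k)
        * (x ^ ((i : ℝ) + r * ((ℓ : ℝ) + (k : ℝ) - (i : ℝ))) * (1 - x) ^ (m' - k))) := by
    intro ℓ k i h
    exact continuous_const.mul ((Real.continuous_rpow_const (hE ℓ k i h)).mul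
      ((continuous_const.sub continuous_id).pow _))
  have hI : ∫ x in (0:ℝ)..1, pW r v x ^ n * pG r v x ^ m'
      = ∫ x in (0:ℝ)..1, ∑ ℓ ∈ range (n + 1), ∑ k ∈ range (m' + 1), ∑ i ∈ range (k + 1),
          ((n.choose ℓ : ℝ) * (m'.choose k : ℝ) * (k.choose i : ℝ) * (-1) ^ (k - i)
              * (v - 1) ^ (ℓ + k) / (r - 1) ^ k)
            * (x ^ ((i : ℝ) + r * ((ℓ : ℝ) + (k : ℝ) - (i : ℝ))) * (1 - x) ^ (m' - k)) := by
    apply intervalIntegral.integral_congr_ae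
    apply Filter.Eventually.of_forall
    intro x hx
    rw [Set.uIoc_of_le zero_le_one] at hx
    exact integrand_expand hr hr1 n m' hx
  have hI2 : ∫ x in (0:ℝ)..1, (∑ ℓ ∈ range (n + 1), ∑ k ∈ range (m' + 1), ∑ i ∈ range (k + 1),
        ((n.choose ℓ : ℝ) * (m'.choose k : ℝ) * (k.choose i : ℝ) * (-1) ^ (k - i)
            * (v - 1) ^ (ℓ + k) / (r - 1) ^ k)
          * (x ^ ((i : ℝ) + r * ((ℓ : ℝ) + (k : ℝ) - (i : ℝ))) * (1 - x) ^ (m' - k)))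
      = ∑ ℓ ∈ range (n + 1), ∑ k ∈ range (m' + 1), ∑ i ∈ range (k + 1),
          ((n.choose ℓ : ℝ) * (m'.choose k : ℝ) * (k.choose i : ℝ) * (-1) ^ (k - i)
              * (v - 1) ^ (ℓ + k) / (r - 1) ^ k)
            * (((m' - k).factorial : ℝ)
                / ∏ t ∈ range (m' - k + 1), ((i : ℝ) + r * ((ℓ : ℝ) + k - i) + 1 + t)) := by
    rw [intervalIntegral.integral_finset_sum]
    · apply Finset.sum_congr rfl
      intro ℓ _
      rw [intervalIntegral.integral_finset_sum]
      · apply Finset.sum_congr rfl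
        intro k _
        rw [intervalIntegral.integral_finset_sum]
        · apply Finset.sum_congr rfl
          intro i hi
          rw [mem_range, Nat.lt_succ_iff] at hi
          rw [intervalIntegral.integral_const_mul, betaInt (m' - k) _ (hE ℓ k i hi)]
        · intro i hi
          rw [mem_range, Nat.lt_succ_iff] at hi
          exact (hterm ℓ k i hi).intervalIntegrable _ _
      · intro k _
        exact (continuous_finset_sum _ (fun i hi => hterm ℓ k i (by
          rw [mem_range, Nat.lt_succ_iff] at hi; exact hi))).intervalIntegrable _ _
    · intro ℓ _
      exact (continuous_finset_sum _ (fun k _ => continuous_finset_sum _ (fun i hi =>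
        hterm ℓ k i (by rw [mem_range, Nat.lt_succ_iff] at hi; exact hi)))).intervalIntegrable _ _
  rw [pPhi]
  simp only [Nat.add_sub_cancel]
  rw [hI, hI2]
  simp only [Finset.mul_sum]

noncomputable def Fterm (r : ℝ) (n M : ℕ) (v : ℝ) (ℓ k : ℕ) : ℝ :=
  ((n.choose ℓ : ℝ) * (M.choose k : ℝ) / (r - 1) ^ k
      * ∑ i ∈ range (k + 1),
          (-1 : ℝ) ^ (k - i) * ((k.choose i : ℝ))
            / genChoose ((M : ℝ) - ((ℓ + k : ℕ) : ℝ) + ℓ + i + r * (((ℓ + k : ℕ) : ℝ) - i))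
                (M + ℓ - (ℓ + k)))
    * (v - 1) ^ (ℓ + k)

lemma alt_sum (k : ℕ) (hk : 1 ≤ k) :
    ∑ i ∈ range (k + 1), (-1 : ℝ) ^ (k - i) * (k.choose i : ℝ) = 0 := by
  have h := add_pow (1 : ℝ) (-1) k
  rw [add_neg_cancel, zero_pow (by omega : k ≠ 0)] at h
  simpa using h.symm

lemma poly_sum (r : ℝ) (n m' : ℕ) (v : ℝ) :
    ∑ s ∈ range (n + m' + 2), cCoef r n (m' + 1) s * (v - 1) ^ s
      = ∑ ℓ ∈ range (n + m' + 2), ∑ k ∈ range (n + m' + 2 - ℓ), Fterm r n (m' + 1) v ℓ k := by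
  unfold cCoef
  simp only [Finset.sum_mul]
  rw [← sum_triangle (n + m' + 2) (Fterm r n (m' + 1) v)]
  apply Finset.sum_congr rfl
  intro s _
  apply Finset.sum_congr rfl
  intro ℓ hℓ
  rw [mem_range, Nat.lt_succ_iff] at hℓ
  have hadd : ℓ + (s - ℓ) = s := by omega
  unfold Fterm
  rw [hadd]

lemma poly_shrink {r : ℝ} (n m' : ℕ) (v : ℝ) :
    ∑ ℓ ∈ range (n + m' + 2), ∑ k ∈ range (n + m' + 2 - ℓ), Fterm r n (m' + 1) v ℓ k
      = ∑ ℓ ∈ range (n + 1), ∑ k ∈ range (m' + 1), Fterm r n (m' + 1) v ℓ k := by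
  rw [← Finset.sum_subset (Finset.range_subset_range.mpr (by omega : n + 1 ≤ n + m' + 2))]
  · apply Finset.sum_congr rfl
    intro ℓ hℓ
    rw [mem_range, Nat.lt_succ_iff] at hℓ
    rw [← Finset.sum_subset (Finset.range_subset_range.mpr (by omega : m' + 1 ≤ n + m' + 2 - ℓ))]
    intro k hk hk2
    rw [mem_range] at hk hk2
    rcases lt_or_ge (m' + 1) k with h | h
    · unfold Fterm
      rw [Nat.choose_eq_zero_of_lt h]
      simp
    · have hk1 : k = m' + 1 := by omega
      subst hk1
      unfold Fterm
      have h0 : (m' + 1) + ℓ - (ℓ + (m' + 1)) = 0 := by omega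
      rw [h0]
      have hg : ∀ x : ℝ, genChoose x 0 = 1 := by intro x; simp [genChoose]
      simp only [hg, div_one]
      rw [alt_sum (m' + 1) (by omega)]
      simp
  · intro ℓ hℓ hℓ2
    rw [mem_range] at hℓ hℓ2
    apply Finset.sum_eq_zero
    intro k _
    unfold Fterm
    rw [Nat.choose_eq_zero_of_lt (by omega : n < ℓ)]
    simp

lemma phi_eq_poly {r : ℝ} (hr : 0 < r) (hr1 : r ≠ 1) (n m' : ℕ) (v : ℝ) :
    pPhi r n (m' + 1) v
      = ∑ s ∈ range (n + m' + 2), cCoef r n (m' + 1) s * (v - 1) ^ s := by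
  rw [poly_sum, poly_shrink, phi_sum hr hr1]
  apply Finset.sum_congr rfl
  intro ℓ hℓ
  apply Finset.sum_congr rfl
  intro k hk
  rw [mem_range, Nat.lt_succ_iff] at hℓ hk
  unfold Fterm
  rw [Finset.mul_sum, Finset.sum_mul]
  apply Finset.sum_congr rfl
  intro i hi
  rw [mem_range, Nat.lt_succ_iff] at hi
  have hE0 : (0:ℝ) ≤ (i : ℝ) + r * ((ℓ : ℝ) + k - i) := by
    have h1 : (i:ℝ) ≤ (k:ℝ) := by exact_mod_cast hi
    have h3 : (0:ℝ) ≤ (ℓ:ℝ) := Nat.cast_nonneg ℓ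
    have h4 := mul_nonneg hr.le (by linarith : (0:ℝ) ≤ (ℓ:ℝ) + k - i)
    have h5 : (0:ℝ) ≤ (i:ℝ) := Nat.cast_nonneg i
    linarith
  have hQ : (m' + 1) + ℓ - (ℓ + k) = (m' - k) + 1 := by omega
  have hA : ((m' + 1 : ℕ) : ℝ) - ((ℓ + k : ℕ) : ℝ) + ℓ + i + r * (((ℓ + k : ℕ) : ℝ) - i)
      = ((((m' - k) + 1 : ℕ)) : ℝ) + ((i : ℝ) + r * ((ℓ : ℝ) + k - i)) := by
    push_cast [Nat.cast_sub hk]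
    ring
  rw [hQ, hA, genChoose_nat_add]
  have hP : (0:ℝ) < ∏ t ∈ range ((m' - k) + 1), ((i : ℝ) + r * ((ℓ : ℝ) + k - i) + 1 + t) := by
    apply Finset.prod_pos
    intro t _
    have := Nat.cast_nonneg (α := ℝ) t
    linarith
  have hnat : (m' + 1) * m'.choose k * (m' - k).factorial
      = (m' + 1).choose k * ((m' - k) + 1).factorial := by
    have key : (m' + 1) * m'.choose k = (m' + 1).choose k * ((m' - k) + 1) := by
      calc (m' + 1) * m'.choose k = (m' + 1).choose (k + 1) * (k + 1) :=
            Nat.add_one_mul_choose_eq m' k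
        _ = (m' + 1).choose k * (m' + 1 - k) := Nat.choose_succ_right_eq (m' + 1) k
        _ = (m' + 1).choose k * ((m' - k) + 1) := by
            rw [show m' + 1 - k = (m' - k) + 1 from by omega]
    calc (m' + 1) * m'.choose k * (m' - k).factorial
        = ((m' + 1).choose k * ((m' - k) + 1)) * (m' - k).factorial := by rw [key]
      _ = (m' + 1).choose k * ((m' - k) + 1).factorial := by
          rw [Nat.factorial_succ]; ring
  have hnatR : ((m' + 1 : ℕ) : ℝ) * (m'.choose k : ℝ) * ((m' - k).factorial : ℝ)
      = (((m' + 1).choose k : ℝ)) * ((((m' - k) + 1).factorial : ℝ)) := by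
    exact_mod_cast hnat
  have hr1' : r - 1 ≠ 0 := sub_ne_zero.mpr hr1
  field_simp
  push_cast at hnatR ⊢
  linear_combination ((n.choose ℓ : ℝ) * (k.choose i : ℝ) * (v-1)^ℓ * (v-1)^k)
    * hnatR

lemma iter_deriv_poly (T : ℕ) (c : ℕ → ℝ) : ∀ s : ℕ,
    deriv^[s] (fun v : ℝ => ∑ t ∈ range T, c t * (v - 1) ^ t)
      = fun v => ∑ t ∈ range T, c t * (t.descFactorial s : ℝ) * (v - 1) ^ (t - s) := by
  intro s
  induction s with
  | zero => simp
  | succ s ih =>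
    rw [Function.iterate_succ_apply', ih]
    funext x
    have hd : ∀ t : ℕ, HasDerivAt (fun v : ℝ => c t * (t.descFactorial s : ℝ) * (v - 1) ^ (t - s))
        (c t * (t.descFactorial s : ℝ) * ((t - s : ℕ) * (x - 1) ^ (t - s - 1))) x := by
      intro t
      have h1 : HasDerivAt (fun v : ℝ => (v - 1) ^ (t - s))
          (((t - s : ℕ) : ℝ) * (x - 1) ^ (t - s - 1) * 1) x :=
        HasDerivAt.pow ((hasDerivAt_id x).sub_const 1) _
      simpa using h1.const_mul (c t * (t.descFactorial s : ℝ))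
    rw [deriv_fun_sum (fun t _ => (hd t).differentiableAt)]
    apply Finset.sum_congr rfl
    intro t _
    rw [(hd t).deriv]
    rw [Nat.descFactorial_succ]
    have he : t - s - 1 = t - (s + 1) := by omega
    rw [he]
    push_cast
    ring

lemma iter_at_one (T : ℕ) (c : ℕ → ℝ) (s : ℕ) :
    iteratedDeriv s (fun v : ℝ => ∑ t ∈ range T, c t * (v - 1) ^ t) 1
      = if s < T then (s.factorial : ℝ) * c s else 0 := by
  rw [iteratedDeriv_eq_iterate, iter_deriv_poly]
  simp only []
  split_ifs with h
  · rw [Finset.sum_eq_single s]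
    · simp [Nat.descFactorial_self, mul_comm]
    · intro t ht hts
      rcases lt_or_ge t s with h2 | h2
      · rw [Nat.descFactorial_eq_zero_iff_lt.mpr h2]
        simp
      · have : (1:ℝ) - 1 = 0 := by norm_num
        rw [this, zero_pow (by omega : t - s ≠ 0)]
        ring
    · intro h2
      exact absurd (mem_range.mpr h) h2
  · apply Finset.sum_eq_zero
    intro t ht
    rw [mem_range] at ht
    rw [Nat.descFactorial_eq_zero_iff_lt.mpr (by omega : t < s)]
    simp

/-- Factorial moments for the pills urn with matrix `((-a, 0), (a, -d))` (`p = 1`), `a ≠ d`: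
the `s`-th factorial moment of `X̃ = X_{n,m} - 1`, given as the `s`-th derivative of
`h_{n,m}(v)/v` at `v = 1`, equals
`s! ∑_{ℓ=0}^s [C(n,ℓ)C(m,s-ℓ)/(a/d-1)^{s-ℓ}]
  ∑_{i=0}^{s-ℓ} (-1)^{s-ℓ-i} C(s-ℓ,i) / C(m-s+ℓ+i+(a/d)(s-i), m-s+ℓ)`. -/
theorem pills_factorial_moment_p_one (a d : ℕ) (ha : 0 < a) (hd : 0 < d) (had : a ≠ d)
    (n m : ℕ) (hm : 1 ≤ m) (s : ℕ) :
    iteratedDeriv s (fun v : ℝ => pillsH (a : ℝ) (d : ℝ) 1 n m v / v) 1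
      = (s.factorial : ℝ)
        * ∑ ℓ ∈ range (s + 1),
            ((n.choose ℓ : ℝ) * (m.choose (s - ℓ) : ℝ) / ((a : ℝ) / d - 1) ^ (s - ℓ))
              * ∑ i ∈ range (s - ℓ + 1),
                  (-1 : ℝ) ^ (s - ℓ - i) * ((s - ℓ).choose i : ℝ)
                    / genChoose
                        ((m : ℝ) - s + ℓ + i + ((a : ℝ) / d) * ((s : ℝ) - i))
                        (m + ℓ - s) := by
  obtain ⟨m', rfl⟩ : ∃ m', m = m' + 1 := ⟨m - 1, by omega⟩
  set r := (a : ℝ) / (d : ℝ) with hrdef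
  have ha' : (0:ℝ) < (a:ℝ) := by exact_mod_cast ha
  have hd' : (0:ℝ) < (d:ℝ) := by exact_mod_cast hd
  have had' : (a:ℝ) ≠ (d:ℝ) := fun h => had (by exact_mod_cast h)
  have hr : 0 < r := div_pos ha' hd'
  have hr1 : r ≠ 1 := by
    rw [hrdef]
    exact fun h => had' ((div_eq_one_iff_eq (ne_of_gt hd')).mp h)
  have hrhs : ∑ ℓ ∈ range (s + 1),
      ((n.choose ℓ : ℝ) * ((m' + 1).choose (s - ℓ) : ℝ) / (r - 1) ^ (s - ℓ))
        * ∑ i ∈ range (s - ℓ + 1),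
            (-1 : ℝ) ^ (s - ℓ - i) * ((s - ℓ).choose i : ℝ)
              / genChoose (((m' + 1 : ℕ) : ℝ) - s + ℓ + i + r * ((s : ℝ) - i))
                  ((m' + 1) + ℓ - s)
      = cCoef r n (m' + 1) s := rfl
  rw [hrhs]
  have heq : (fun v : ℝ => pillsH (a : ℝ) (d : ℝ) 1 n (m' + 1) v / v) =ᶠ[nhds 1]
      (fun v : ℝ => ∑ t ∈ range (n + m' + 2), cCoef r n (m' + 1) t * (v - 1) ^ t) := by
    have hnb : {v : ℝ | v ≠ 0} ∈ nhds (1:ℝ) :=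
      isOpen_compl_singleton.mem_nhds (by norm_num)
    filter_upwards [hnb] with v hv
    rw [pillsH_eq_phi (a : ℝ) (d : ℝ) ha' hd' had' (m' + 1) (by omega) n v]
    rw [← hrdef, phi_eq_poly hr hr1]
    field_simp
  rw [heq.iteratedDeriv_eq s]
  rw [iter_at_one]
  split_ifs with h
  · rfl
  · rw [cCoef_vanish r n (m' + 1) s (by omega)]
    ring
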